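/- Assume the smallest CAV index satisfies i₁ ≥ 2 and that α₁ − α₂α₃ + α₃² ≠ 0. Let p = n − i₁ + 1, let A₂₂ ∈ ℝ^{2p×2p} be the bottom-right principal submatrix of A consisting of rows and columns 2(i₁−1)+1 through 2n, and let B₂ ∈ ℝ^{2p×m} consist of the corresponding rows of B. Then the pair (A₂₂, B₂) is controllable, i.e. the controllability matrix [B₂, A₂₂B₂, …, A₂₂^{2p−1}B₂] has rank 2p; that is, the subsystem consisting of the states s̃_{i₁}, ṽ_{i₁}, …, s̃_n, ṽ_n is controllable. -/

import Mathlib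

open Matrix

/-- The controllability matrix `[B, AB, …, A^{N−1}B]` of a pair `(A, B)`. -/
noncomputable def ctrbMat {N p : ℕ} (A : Matrix (Fin N) (Fin N) ℝ)
    (B : Matrix (Fin N) (Fin p) ℝ) : Matrix (Fin N) (Fin N × Fin p) ℝ :=
  Matrix.of fun r kj => (A ^ (kj.1 : ℕ) * B) r kj.2

/-- The observability matrix `col(C, CA, …, CA^{N−1})` of a pair `(A, C)`. -/
noncomputable def obsvMat {N p : ℕ} (A : Matrix (Fin N) (Fin N) ℝ)
    (C : Matrix (Fin p) (Fin N) ℝ) : Matrix (Fin N × Fin p) (Fin N) ℝ :=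
  Matrix.of fun kj c => (C * A ^ (kj.1 : ℕ)) kj.2 c

noncomputable def matP1 (α1 α2 : ℝ) : Matrix (Fin 2) (Fin 2) ℝ := !![0, -1; α1, -α2]
noncomputable def matP2 (α3 : ℝ) : Matrix (Fin 2) (Fin 2) ℝ := !![0, 1; 0, α3]
noncomputable def matS1 : Matrix (Fin 2) (Fin 2) ℝ := !![(0:ℝ), -1; 0, 0]
noncomputable def matS2 : Matrix (Fin 2) (Fin 2) ℝ := !![(0:ℝ), 1; 0, 0]

def fin2 (k : ℕ) : Fin 2 := ⟨k % 2, Nat.mod_lt _ (by norm_num)⟩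

/-- The mixed-traffic system matrix `A ∈ ℝ^{2n×2n}` (vehicles 0-indexed `0,…,n−1`;
the CAV locations are given by the strictly increasing map `ι : Fin m → Fin n`).
Block `(i,i)` is `S₁` if vehicle `i` is a CAV, `P₁` otherwise; block `(i,i−1)` is
`S₂` if vehicle `i` is a CAV, `P₂` otherwise; all other blocks vanish. -/
noncomputable def trafficA (n m : ℕ) (ι : Fin m → Fin n) (α1 α2 α3 : ℝ) :
    Matrix (Fin (2 * n)) (Fin (2 * n)) ℝ :=
  Matrix.of fun r c =>
    if (r : ℕ) / 2 = (c : ℕ) / 2 then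
      (if ∃ k, (ι k : ℕ) = (r : ℕ) / 2 then matS1 (fin2 r) (fin2 c)
       else matP1 α1 α2 (fin2 r) (fin2 c))
    else if (r : ℕ) / 2 = (c : ℕ) / 2 + 1 then
      (if ∃ k, (ι k : ℕ) = (r : ℕ) / 2 then matS2 (fin2 r) (fin2 c)
       else matP2 α3 (fin2 r) (fin2 c))
    else 0

/-- The input matrix `B ∈ ℝ^{2n×m}`: the `k`-th column is the standard basis
vector whose nonzero entry sits at the (0-indexed) position `2·ι(k)+1`,
i.e. the velocity component of the `k`-th CAV. -/
noncomputable def trafficB (n m : ℕ) (ι : Fin m → Fin n) :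
    Matrix (Fin (2 * n)) (Fin m) ℝ :=
  Matrix.of fun r k => if (r : ℕ) = 2 * (ι k : ℕ) + 1 then 1 else 0

/-- The output matrix `C ∈ ℝ^{(n+m)×2n}`: the first `n` rows pick out the velocity
errors of all vehicles, the last `m` rows pick out the spacing errors of the CAVs. -/
noncomputable def trafficC (n m : ℕ) (ι : Fin m → Fin n) :
    Matrix (Fin (n + m)) (Fin (2 * n)) ℝ :=
  Matrix.of fun j c =>
    if h : (j : ℕ) < n then (if (c : ℕ) = 2 * (j : ℕ) + 1 then 1 else 0)
    else (if (c : ℕ) = 2 * (ι ⟨(j : ℕ) - n, by have := j.isLt; omega⟩ : ℕ) then 1 else 0)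


/-! ### Auxiliary lemmas for the controllability proof -/

section AuxLemmas

lemma aux_rank_eq_of_vecMul_inj {N : ℕ} {K : Type*} [Fintype K] (M : Matrix (Fin N) K ℝ)
    (h : ∀ w : Fin N → ℝ, w ᵥ* M = 0 → w = 0) : M.rank = N := by
  have hinj : Function.Injective (Mᵀ.mulVecLin) := by
    rw [← LinearMap.ker_eq_bot, LinearMap.ker_eq_bot']
    intro w hw
    exact h w (by simpa [Matrix.mulVecLin, Matrix.mulVec_transpose] using hw)
  rw [← Matrix.rank_transpose, Matrix.rank, LinearMap.finrank_range_of_inj hinj]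
  simp

lemma aux_vecMul_smul_mat {N : ℕ} {K : Type*} [Fintype K] (w : Fin N → ℂ) (c : ℂ)
    (M : Matrix (Fin N) K ℂ) : w ᵥ* (c • M) = c • (w ᵥ* M) := by
  ext i
  simp [Matrix.vecMul, dotProduct, Finset.mul_sum, mul_left_comm]

lemma aux_vecMul_sum_smul {N : ℕ} {K : Type*} [Fintype K] (w : Fin N → ℂ) (s : Finset ℕ)
    (c : ℕ → ℂ) (M : ℕ → Matrix (Fin N) K ℂ) :
    w ᵥ* (∑ j ∈ s, c j • M j) = ∑ j ∈ s, c j • (w ᵥ* M j) := by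
  induction s using Finset.induction with
  | empty => simp
  | insert a s h ih =>
      rw [Finset.sum_insert h, Finset.sum_insert h, Matrix.vecMul_add, ih, aux_vecMul_smul_mat]

lemma aux_ctrb_all_pow {N p : ℕ} (A : Matrix (Fin N) (Fin N) ℂ) (B : Matrix (Fin N) (Fin p) ℂ)
    (w : Fin N → ℂ) (h : ∀ k < N, w ᵥ* (A ^ k * B) = 0) : ∀ k, w ᵥ* (A ^ k * B) = 0 := by
  have hdeg : A.charpoly.natDegree = N := by
    simpa using A.charpoly_natDegree_eq_dim
  have hc : A.charpoly.coeff N = 1 := by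
    have hm := A.charpoly_monic
    rw [Polynomial.Monic, Polynomial.leadingCoeff, hdeg] at hm
    exact hm
  have hpow : A ^ N = -(∑ j ∈ Finset.range N, A.charpoly.coeff j • A ^ j) := by
    have h0 := A.aeval_self_charpoly
    rw [Polynomial.aeval_eq_sum_range, hdeg, Finset.sum_range_succ, hc, one_smul] at h0
    exact (neg_eq_of_add_eq_zero_right h0).symm
  intro k
  induction k using Nat.strong_induction_on with
  | _ k ih =>
    rcases lt_or_ge k N with hk | hk
    · exact h k hk
    · have hA : A ^ k * B
          = -(∑ j ∈ Finset.range N, A.charpoly.coeff j • (A ^ (k - N + j) * B)) := by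
        have h1 : A ^ k = A ^ (k - N) * A ^ N := by rw [← pow_add]; congr 1; omega
        rw [h1, hpow, Matrix.mul_neg, Finset.mul_sum, Matrix.neg_mul, Matrix.sum_mul]
        congr 1
        refine Finset.sum_congr rfl fun j hj => ?_
        rw [mul_smul_comm, Matrix.smul_mul, ← pow_add]
      rw [hA, Matrix.vecMul_neg, aux_vecMul_sum_smul]
      have hz : ∀ j ∈ Finset.range N,
          A.charpoly.coeff j • (w ᵥ* (A ^ (k - N + j) * B)) = 0 := by
        intro j hj
        rw [ih (k - N + j) (by simp only [Finset.mem_range] at hj; omega)]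
        simp
      rw [Finset.sum_congr rfl hz]
      simp

lemma aux_exists_left_eigvec {N p : ℕ} (A : Matrix (Fin N) (Fin N) ℂ)
    (B : Matrix (Fin N) (Fin p) ℂ) (w : Fin N → ℂ) (hw : w ≠ 0)
    (h : ∀ k, w ᵥ* (A ^ k * B) = 0) :
    ∃ (μ : ℂ) (v : Fin N → ℂ), v ≠ 0 ∧ v ᵥ* A = μ • v ∧ v ᵥ* B = 0 := by
  let W : Submodule ℂ (Fin N → ℂ) :=
    { carrier := {u | ∀ k, u ᵥ* (A ^ k * B) = 0}
      add_mem' := by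
        intro a b ha hb k
        rw [Matrix.add_vecMul, ha k, hb k, add_zero]
      zero_mem' := by intro k; simp
      smul_mem' := by
        intro c a ha k
        rw [Matrix.smul_vecMul, ha k, smul_zero] }
  have hmem : ∀ u ∈ W, u ᵥ* A ∈ W := by
    intro u hu k
    rw [Matrix.vecMul_vecMul, ← Matrix.mul_assoc, ← pow_succ']
    exact hu (k + 1)
  let f : Module.End ℂ W := (A.vecMulLinear).restrict hmem
  have : Nontrivial W := by
    refine Submodule.nontrivial_iff_ne_bot.mpr ?_
    intro hbot
    exact hw (by simpa [hbot] using Submodule.mem_bot ℂ |>.mp (hbot ▸ (h : w ∈ W)))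
  obtain ⟨μ, hμ⟩ := Module.End.exists_eigenvalue f
  obtain ⟨v, hv⟩ := hμ.exists_hasEigenvector
  refine ⟨μ, (v : Fin N → ℂ), ?_, ?_, ?_⟩
  · intro h0
    exact hv.right (Subtype.ext h0)
  · have h1 := hv.apply_eq_smul
    have h2 : ((f v : W) : Fin N → ℂ) = μ • (v : Fin N → ℂ) := by
      rw [h1]; rfl
    exact h2
  · have hvW : (v : Fin N → ℂ) ∈ W := v.2
    simpa using hvW 0

lemma aux_chain_down (q : ℕ) (cav : ℕ → Prop) [DecidablePred cav]
    (α1 α2 α3 μ : ℂ) (hα1 : α1 ≠ 0)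
    (hOK : μ = 0 ∨ μ^2 + α2*μ + α1 ≠ 0)
    (a b : ℕ → ℂ)
    (HS : ∀ j < q, (if cav j then 0 else α1 * b j) = μ * a j)
    (HV : ∀ j < q, -a j - (if cav j then 0 else α2 * b j)
        + (if j+1 < q then a (j+1) + (if cav (j+1) then 0 else α3 * b (j+1)) else 0) = μ * b j)
    (HB : ∀ j < q, cav j → b j = 0) :
    ∀ j < q, a j = 0 ∧ b j = 0 := by
  suffices H : ∀ d j, j < q → q - j ≤ d → a j = 0 ∧ b j = 0 by
    intro j hj; exact H (q - j) j hj le_rfl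
  intro d
  induction d with
  | zero => intro j hj hd; omega
  | succ d ih =>
    intro j hj hd
    have htail : (if j+1 < q then a (j+1) + (if cav (j+1) then 0 else α3 * b (j+1)) else 0)
        = 0 := by
      by_cases h1 : j + 1 < q
      · obtain ⟨ha1, hb1⟩ := ih (j+1) h1 (by omega)
        simp [h1, ha1, hb1]
      · simp [h1]
    have hb : b j = 0 := by
      by_cases hc : cav j
      · exact HB j hj hc
      · have hs := HS j hj
        have hv := HV j hj
        rw [htail, if_neg hc] at hv
        rw [if_neg hc] at hs
        rcases hOK with h0 | hne
        · subst h0; simpa [hα1] using hs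
        · have : (μ^2 + α2*μ + α1) * b j = 0 := by linear_combination (-μ) * hv + hs
          exact (mul_eq_zero.mp this).resolve_left hne
    have ha : a j = 0 := by
      have hv := HV j hj
      rw [htail] at hv
      by_cases hc : cav j
      · rw [if_pos hc, hb] at hv
        simpa using hv
      · rw [if_neg hc, hb] at hv
        simpa using hv
    exact ⟨ha, hb⟩

lemma aux_chain_elim (q : ℕ) (cav : ℕ → Prop) [DecidablePred cav] (hcav0 : cav 0)
    (α1 α2 α3 μ : ℂ) (hα1 : α1 ≠ 0) (hα3 : α3 ≠ 0)
    (hcond : α1 - α2 * α3 + α3 ^ 2 ≠ 0)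
    (a b : ℕ → ℂ)
    (HS : ∀ j < q, (if cav j then 0 else α1 * b j) = μ * a j)
    (HV : ∀ j < q, -a j - (if cav j then 0 else α2 * b j)
        + (if j+1 < q then a (j+1) + (if cav (j+1) then 0 else α3 * b (j+1)) else 0) = μ * b j)
    (HB : ∀ j < q, cav j → b j = 0) :
    ∀ j < q, a j = 0 ∧ b j = 0 := by
  by_cases hch : μ = 0 ∨ μ^2 + α2*μ + α1 ≠ 0
  · exact aux_chain_down q cav α1 α2 α3 μ hα1 hch a b HS HV HB
  · push_neg at hch
    obtain ⟨hμ, hch⟩ := hch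
    have hcavz : ∀ j < q, cav j → a j = 0 ∧ b j = 0 := by
      intro j hj hc
      have hb := HB j hj hc
      have hs := HS j hj
      rw [if_pos hc] at hs
      exact ⟨(mul_eq_zero.mp hs.symm).resolve_left hμ, hb⟩
    intro j hj
    by_cases hc : cav j
    · exact hcavz j hj hc
    · have hj1 : 1 ≤ j := by
        by_contra h
        exact hc (by simpa [show j = 0 by omega] using hcav0)
      have hkey : a j + α3 * b j = 0 := by
        have hv := HV (j-1) (by omega)
        rw [show j - 1 + 1 = j by omega, if_pos hj, if_neg hc] at hv
        by_cases hc' : cav (j-1)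
        · obtain ⟨ha', hb'⟩ := hcavz (j-1) (by omega) hc'
          rw [if_pos hc', ha', hb'] at hv
          simpa using hv
        · rw [if_neg hc'] at hv
          have hs' := HS (j-1) (by omega)
          rw [if_neg hc'] at hs'
          have h0 : μ * (a j + α3 * b j) = (μ^2 + α2*μ + α1) * b (j-1) := by
            linear_combination μ * hv - hs'
          rw [hch, zero_mul] at h0
          exact (mul_eq_zero.mp h0).resolve_left hμ
      have hs := HS j hj
      rw [if_neg hc] at hs
      have hbz : b j = 0 := by
        have h1 : (α1 + α3 * μ) * b j = 0 := by linear_combination hs + μ * hkey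
        rcases mul_eq_zero.mp h1 with h2 | h2
        · exfalso
          have h3 : μ * (μ + α2 - α3) = 0 := by linear_combination hch - h2
          have h4 : μ = α3 - α2 := by
            rcases mul_eq_zero.mp h3 with h5 | h5
            · exact absurd h5 hμ
            · linear_combination h5
          exact hcond (by linear_combination h2 - α3 * h4)
        · exact h2
      refine ⟨?_, hbz⟩
      have hk2 := hkey
      rw [hbz] at hk2
      simpa using hk2

lemma aux_sum_range_eq_four {M : Type*} [AddCommMonoid M] (F : ℕ → M) (n j : ℕ)
    (hlow : ∀ r, r < 2*j → F r = 0) (hhigh : ∀ r, 2*j+4 ≤ r → F r = 0)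
    (hbig : ∀ r, n ≤ r → F r = 0) :
    ∑ r ∈ Finset.range n, F r = F (2*j) + F (2*j+1) + F (2*j+2) + F (2*j+3) := by
  have h1 : ∑ r ∈ Finset.range n, F r = ∑ r ∈ Finset.range (n + (2*j+4)), F r := by
    refine Finset.sum_subset (Finset.range_subset_range.2 (by omega)) fun x _ hx => ?_
    exact hbig x (by simpa using hx)
  rw [h1, Finset.range_eq_Ico,
    ← Finset.sum_Ico_consecutive F (Nat.zero_le (2*j+4)) (by omega : 2*j+4 ≤ n + (2*j+4))]
  have h2 : ∑ r ∈ Finset.Ico (2*j+4) (n + (2*j+4)), F r = 0 :=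
    Finset.sum_eq_zero fun x hx => hhigh x (Finset.mem_Ico.mp hx).1
  rw [h2, add_zero, ← Finset.range_eq_Ico]
  rw [show 2*j+4 = (2*j+3)+1 by omega, Finset.sum_range_succ]
  rw [show 2*j+3 = (2*j+2)+1 by omega, Finset.sum_range_succ]
  rw [show 2*j+2 = (2*j+1)+1 by omega, Finset.sum_range_succ]
  rw [show 2*j+1 = (2*j)+1 by omega, Finset.sum_range_succ]
  rw [Finset.sum_eq_zero fun x hx => hlow x (Finset.mem_range.mp hx)]
  abel

lemma fin2_zero' {k : ℕ} (h : k % 2 = 0) : fin2 k = 0 := by simp [fin2, Fin.ext_iff, h]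
lemma fin2_one' {k : ℕ} (h : k % 2 = 1) : fin2 k = 1 := by simp [fin2, Fin.ext_iff, h]

section TrafficEntries
variable (n m : ℕ) (ι : Fin m → Fin n) (α1 α2 α3 : ℝ)

lemma tA_apply (r c : ℕ) (hr : r < 2*n) (hc : c < 2*n) :
    trafficA n m ι α1 α2 α3 ⟨r, hr⟩ ⟨c, hc⟩ =
    if r / 2 = c / 2 then
      (if ∃ k, (ι k : ℕ) = r / 2 then matS1 (fin2 r) (fin2 c)
       else matP1 α1 α2 (fin2 r) (fin2 c))
    else if r / 2 = c / 2 + 1 then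
      (if ∃ k, (ι k : ℕ) = r / 2 then matS2 (fin2 r) (fin2 c)
       else matP2 α3 (fin2 r) (fin2 c))
    else 0 := rfl

lemma tA_far (r c : ℕ) (hr : r < 2*n) (hc : c < 2*n)
    (h1 : r / 2 ≠ c / 2) (h2 : r / 2 ≠ c / 2 + 1) :
    trafficA n m ι α1 α2 α3 ⟨r, hr⟩ ⟨c, hc⟩ = 0 := by
  rw [tA_apply, if_neg h1, if_neg h2]

lemma tA_ss (r c g : ℕ) (hr : r < 2*n) (hc : c < 2*n) (h1 : r = 2*g) (h2 : c = 2*g) :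
    trafficA n m ι α1 α2 α3 ⟨r, hr⟩ ⟨c, hc⟩ = 0 := by
  subst h1 h2
  rw [tA_apply, if_pos rfl, fin2_zero' (by omega)]
  split <;> simp [matS1, matP1]

lemma tA_vs (r c g : ℕ) (hr : r < 2*n) (hc : c < 2*n) (h1 : r = 2*g+1) (h2 : c = 2*g) :
    trafficA n m ι α1 α2 α3 ⟨r, hr⟩ ⟨c, hc⟩ =
      if ∃ k, (ι k : ℕ) = g then 0 else α1 := by
  subst h1 h2
  rw [tA_apply, if_pos (by omega : (2*g+1)/2 = (2*g)/2),
    fin2_one' (by omega), fin2_zero' (by omega), show (2*g+1)/2 = g by omega]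
  split <;> simp [matS1, matP1]

lemma tA_sv (r c g : ℕ) (hr : r < 2*n) (hc : c < 2*n) (h1 : r = 2*g) (h2 : c = 2*g+1) :
    trafficA n m ι α1 α2 α3 ⟨r, hr⟩ ⟨c, hc⟩ = -1 := by
  subst h1 h2
  rw [tA_apply, if_pos (by omega : (2*g)/2 = (2*g+1)/2),
    fin2_zero' (by omega), fin2_one' (by omega)]
  split <;> simp [matS1, matP1]

lemma tA_vv (r c g : ℕ) (hr : r < 2*n) (hc : c < 2*n) (h1 : r = 2*g+1) (h2 : c = 2*g+1) :
    trafficA n m ι α1 α2 α3 ⟨r, hr⟩ ⟨c, hc⟩ =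
      if ∃ k, (ι k : ℕ) = g then 0 else -α2 := by
  subst h1 h2
  rw [tA_apply, if_pos rfl, fin2_one' (by omega), show (2*g+1)/2 = g by omega]
  split <;> simp [matS1, matP1]

lemma tA_s's (r c g : ℕ) (hr : r < 2*n) (hc : c < 2*n) (h1 : r = 2*(g+1)) (h2 : c = 2*g) :
    trafficA n m ι α1 α2 α3 ⟨r, hr⟩ ⟨c, hc⟩ = 0 := by
  subst h1 h2
  rw [tA_apply, if_neg (by omega), if_pos (by omega : (2*(g+1))/2 = (2*g)/2 + 1),
    fin2_zero' (by omega), fin2_zero' (by omega)]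
  split <;> simp [matS2, matP2]

lemma tA_v's (r c g : ℕ) (hr : r < 2*n) (hc : c < 2*n) (h1 : r = 2*(g+1)+1) (h2 : c = 2*g) :
    trafficA n m ι α1 α2 α3 ⟨r, hr⟩ ⟨c, hc⟩ = 0 := by
  subst h1 h2
  rw [tA_apply, if_neg (by omega), if_pos (by omega : (2*(g+1)+1)/2 = (2*g)/2 + 1),
    fin2_one' (by omega), fin2_zero' (by omega)]
  split <;> simp [matS2, matP2]

lemma tA_s'v (r c g : ℕ) (hr : r < 2*n) (hc : c < 2*n) (h1 : r = 2*(g+1)) (h2 : c = 2*g+1) :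
    trafficA n m ι α1 α2 α3 ⟨r, hr⟩ ⟨c, hc⟩ = 1 := by
  subst h1 h2
  rw [tA_apply, if_neg (by omega), if_pos (by omega : (2*(g+1))/2 = (2*g+1)/2 + 1),
    fin2_zero' (by omega), fin2_one' (by omega)]
  split <;> simp [matS2, matP2]

lemma tA_v'v (r c g : ℕ) (hr : r < 2*n) (hc : c < 2*n) (h1 : r = 2*(g+1)+1) (h2 : c = 2*g+1) :
    trafficA n m ι α1 α2 α3 ⟨r, hr⟩ ⟨c, hc⟩ =
      if ∃ k, (ι k : ℕ) = g + 1 then 0 else α3 := by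
  subst h1 h2
  rw [tA_apply, if_neg (by omega), if_pos (by omega : (2*(g+1)+1)/2 = (2*g+1)/2 + 1),
    fin2_one' (by omega), fin2_one' (by omega), show (2*(g+1)+1)/2 = g+1 by omega]
  split <;> simp [matS2, matP2]

lemma tB_apply (r : ℕ) (hr : r < 2*n) (k : Fin m) :
    trafficB n m ι ⟨r, hr⟩ k = if r = 2 * (ι k : ℕ) + 1 then 1 else 0 := rfl

end TrafficEntries

end AuxLemmas

set_option maxHeartbeats 1600000 in
lemma aux_key (n m q i0 : ℕ) (hm : 1 ≤ m) (ι : Fin m → Fin n) (α1 α2 α3 : ℝ)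
    (hα1 : 0 < α1) (hα3 : 0 < α3)
    (hcond : α1 - α2 * α3 + α3 ^ 2 ≠ 0)
    (hi0 : (ι ⟨0, hm⟩ : ℕ) = i0) (hqn : i0 + q = n) (hq0 : 0 < q)
    (f : Fin (2*q) → Fin (2*n))
    (hf : ∀ r : Fin (2*q), (f r : ℕ) = 2*i0 + (r : ℕ))
    (w : Fin (2*q) → ℝ)
    (hw : w ᵥ* ctrbMat ((trafficA n m ι α1 α2 α3).submatrix f f)
        ((trafficB n m ι).submatrix f id) = 0) :
    w = 0 := by
  classical
  by_contra hw0
  set A22 := (trafficA n m ι α1 α2 α3).submatrix f f with hA22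
  set B2 := (trafficB n m ι).submatrix f id with hB2
  have hker : ∀ k : ℕ, k < 2*q → w ᵥ* (A22 ^ k * B2) = 0 := by
    intro k hk
    funext i
    have h1 := congrFun hw (⟨k, hk⟩, i)
    simpa [ctrbMat, Matrix.vecMul, dotProduct] using h1
  set Ac : Matrix (Fin (2*q)) (Fin (2*q)) ℂ := A22.map ⇑Complex.ofRealHom with hAc
  set Bc : Matrix (Fin (2*q)) (Fin m) ℂ := B2.map ⇑Complex.ofRealHom with hBc
  set wc : Fin (2*q) → ℂ := fun r => ((w r : ℝ) : ℂ) with hwc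
  have hmappow : ∀ k : ℕ, (A22 ^ k).map ⇑Complex.ofRealHom = Ac ^ k := by
    intro k
    induction k with
    | zero =>
        rw [pow_zero, pow_zero]
        exact Matrix.map_one _ (map_zero _) (map_one _)
    | succ k ih => rw [pow_succ, pow_succ, ← ih, hAc, ← Matrix.map_mul]
  have hkerC : ∀ k, k < 2*q → wc ᵥ* (Ac ^ k * Bc) = 0 := by
    intro k hk
    funext i
    have h1 := congrFun (hker k hk) i
    have h2 : Ac ^ k * Bc = ((A22 ^ k) * B2).map ⇑Complex.ofRealHom := by
      rw [Matrix.map_mul, hmappow]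
    rw [h2]
    simp only [Matrix.vecMul, dotProduct, Pi.zero_apply] at h1 ⊢
    have h3 := congrArg (fun x : ℝ => (x : ℂ)) h1
    push_cast at h3
    simpa [hwc, Matrix.map_apply] using h3
  have hwc0 : wc ≠ 0 := by
    intro h0
    apply hw0
    funext r
    have := congrFun h0 r
    simpa [hwc] using this
  obtain ⟨μ, v, hv0, heig, hvB⟩ := aux_exists_left_eigvec Ac Bc wc hwc0
    (aux_ctrb_all_pow Ac Bc wc hkerC)
  set cav : ℕ → Prop := fun j => ∃ k, (ι k : ℕ) = i0 + j with hcav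
  have cav_iff : ∀ j, cav j ↔ ∃ k, (ι k : ℕ) = i0 + j := fun j => by rw [hcav]
  set a : ℕ → ℂ := fun j => if h : 2*j < 2*q then v ⟨2*j, h⟩ else 0 with ha
  set b : ℕ → ℂ := fun j => if h : 2*j+1 < 2*q then v ⟨2*j+1, h⟩ else 0 with hb
  have hcav0 : cav 0 := (cav_iff 0).mpr ⟨⟨0, hm⟩, by omega⟩
  have hbound : ∀ r : ℕ, r < 2*q → 2*i0 + r < 2*n := fun r hr => by omega
  have hAe : ∀ (r c : ℕ) (hr : r < 2*q) (hc : c < 2*q), Ac ⟨r, hr⟩ ⟨c, hc⟩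
      = Complex.ofRealHom (trafficA n m ι α1 α2 α3
          ⟨2*i0 + r, hbound r hr⟩ ⟨2*i0 + c, hbound c hc⟩) := by
    intro r c hr hc
    have h1 : f ⟨r, hr⟩ = ⟨2*i0 + r, hbound r hr⟩ := Fin.ext (hf ⟨r, hr⟩)
    have h2 : f ⟨c, hc⟩ = ⟨2*i0 + c, hbound c hc⟩ := Fin.ext (hf ⟨c, hc⟩)
    rw [hAc, Matrix.map_apply, hA22, Matrix.submatrix_apply, h1, h2]
  have hBe : ∀ (r : Fin (2*q)) (k : Fin m), Bc r k
      = Complex.ofRealHom (if 2*i0 + (r : ℕ) = 2 * (ι k : ℕ) + 1 then (1:ℝ) else 0) := by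
    intro r k
    have h1 : f r = ⟨2*i0 + (r : ℕ), hbound _ r.isLt⟩ := Fin.ext (hf r)
    rw [hBc, Matrix.map_apply, hB2, Matrix.submatrix_apply, h1, tB_apply, id]
  have heigc : ∀ c : Fin (2*q), ∑ r : Fin (2*q), v r * Ac r c = μ * v c := by
    intro c
    have h1 := congrFun heig c
    simpa [Matrix.vecMul, dotProduct, Pi.smul_apply, smul_eq_mul] using h1
  have hvBc : ∀ k : Fin m, ∑ r : Fin (2*q), v r * Bc r k = 0 := by
    intro k
    have h1 := congrFun hvB k
    simpa [Matrix.vecMul, dotProduct] using h1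
  -- the three structural hypotheses
  have HB : ∀ j < q, cav j → b j = 0 := by
    intro j hj hcv
    obtain ⟨k, hk⟩ := (cav_iff j).mp hcv
    have hr2 : 2*j+1 < 2*q := by omega
    have h1 := hvBc k
    have h2 : ∀ r : Fin (2*q), v r * Bc r k
        = if r = (⟨2*j+1, hr2⟩ : Fin (2*q)) then v r else 0 := by
      intro r
      rw [hBe r k]
      by_cases hr : (r : ℕ) = 2*j+1
      · rw [if_pos (by omega), if_pos (Fin.ext hr)]
        simp
      · rw [if_neg (by omega), if_neg (fun h => hr (by rw [h]))]
        simp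
    rw [Finset.sum_congr rfl (fun r _ => h2 r), Finset.sum_ite_eq' Finset.univ] at h1
    simp only [Finset.mem_univ, if_true] at h1
    simp only [hb]
    rw [dif_pos hr2]
    exact h1
  have HS : ∀ j < q, (if cav j then 0 else (α1:ℂ) * b j) = μ * a j := by
    intro j hj
    have hc2 : 2*j < 2*q := by omega
    have hr1 : 2*j+1 < 2*q := by omega
    have he := heigc ⟨2*j, hc2⟩
    set F : ℕ → ℂ := fun r =>
      if h : r < 2*q then v ⟨r, h⟩ * Ac ⟨r, h⟩ ⟨2*j, hc2⟩ else 0 with hF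
    have hsum : ∑ r : Fin (2*q), v r * Ac r ⟨2*j, hc2⟩ = ∑ r ∈ Finset.range (2*q), F r := by
      rw [← Fin.sum_univ_eq_sum_range F (2*q)]
      refine Finset.sum_congr rfl fun r _ => ?_
      simp only [hF]
      rw [dif_pos r.isLt]
    have hbig : ∀ r, 2*q ≤ r → F r = 0 := by
      intro r hr; simp only [hF]; rw [dif_neg (by omega)]
    have hlow : ∀ r, r < 2*j → F r = 0 := by
      intro r hr
      simp only [hF]
      split
      · rename_i h
        rw [hAe r (2*j) h hc2, tA_far n m ι α1 α2 α3 _ _ _ _ (by omega) (by omega)]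
        simp
      · rfl
    have hhigh : ∀ r, 2*j+4 ≤ r → F r = 0 := by
      intro r hr
      simp only [hF]
      split
      · rename_i h
        rw [hAe r (2*j) h hc2, tA_far n m ι α1 α2 α3 _ _ _ _ (by omega) (by omega)]
        simp
      · rfl
    rw [hsum, aux_sum_range_eq_four F (2*q) j hlow hhigh hbig] at he
    have hF0 : F (2*j) = 0 := by
      simp only [hF]
      rw [dif_pos hc2, hAe (2*j) (2*j) hc2 hc2,
        tA_ss n m ι α1 α2 α3 _ _ (i0+j) _ _ (by ring) (by ring)]
      simp
    have hF2 : F (2*j+2) = 0 := by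
      simp only [hF]
      split
      · rename_i h
        rw [hAe (2*j+2) (2*j) h hc2,
          tA_s's n m ι α1 α2 α3 _ _ (i0+j) _ _ (by ring) (by ring)]
        simp
      · rfl
    have hF3 : F (2*j+3) = 0 := by
      simp only [hF]
      split
      · rename_i h
        rw [hAe (2*j+3) (2*j) h hc2,
          tA_v's n m ι α1 α2 α3 _ _ (i0+j) _ _ (by ring) (by ring)]
        simp
      · rfl
    have hF1 : F (2*j+1) = (if cav j then 0 else (α1:ℂ)) * v ⟨2*j+1, hr1⟩ := by
      simp only [hF]
      rw [dif_pos hr1, hAe (2*j+1) (2*j) hr1 hc2,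
        tA_vs n m ι α1 α2 α3 _ _ (i0+j) _ _ (by ring) (by ring)]
      by_cases hcv : cav j
      · rw [if_pos ((cav_iff j).mp hcv), if_pos hcv]
        simp
      · rw [if_neg (fun h => hcv ((cav_iff j).mpr h)), if_neg hcv]
        simp only [Complex.ofRealHom_eq_coe]
        ring
    rw [hF0, hF1, hF2, hF3] at he
    have haj : a j = v ⟨2*j, hc2⟩ := by simp only [ha]; rw [dif_pos hc2]
    have hbj : b j = v ⟨2*j+1, hr1⟩ := by simp only [hb]; rw [dif_pos hr1]
    rw [haj, hbj]
    by_cases hcv : cav j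
    · rw [if_pos hcv] at he ⊢
      linear_combination he
    · rw [if_neg hcv] at he ⊢
      linear_combination he
  have HV : ∀ j < q, -a j - (if cav j then 0 else (α2:ℂ) * b j)
      + (if j+1 < q then a (j+1) + (if cav (j+1) then 0 else (α3:ℂ) * b (j+1)) else 0)
      = μ * b j := by
    intro j hj
    have hr1 : 2*j+1 < 2*q := by omega
    have hc2 : 2*j < 2*q := by omega
    have he := heigc ⟨2*j+1, hr1⟩
    set F : ℕ → ℂ := fun r =>
      if h : r < 2*q then v ⟨r, h⟩ * Ac ⟨r, h⟩ ⟨2*j+1, hr1⟩ else 0 with hF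
    have hsum : ∑ r : Fin (2*q), v r * Ac r ⟨2*j+1, hr1⟩
        = ∑ r ∈ Finset.range (2*q), F r := by
      rw [← Fin.sum_univ_eq_sum_range F (2*q)]
      refine Finset.sum_congr rfl fun r _ => ?_
      simp only [hF]
      rw [dif_pos r.isLt]
    have hbig : ∀ r, 2*q ≤ r → F r = 0 := by
      intro r hr; simp only [hF]; rw [dif_neg (by omega)]
    have hlow : ∀ r, r < 2*j → F r = 0 := by
      intro r hr
      simp only [hF]
      split
      · rename_i h
        rw [hAe r (2*j+1) h hr1, tA_far n m ι α1 α2 α3 _ _ _ _ (by omega) (by omega)]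
        simp
      · rfl
    have hhigh : ∀ r, 2*j+4 ≤ r → F r = 0 := by
      intro r hr
      simp only [hF]
      split
      · rename_i h
        rw [hAe r (2*j+1) h hr1, tA_far n m ι α1 α2 α3 _ _ _ _ (by omega) (by omega)]
        simp
      · rfl
    rw [hsum, aux_sum_range_eq_four F (2*q) j hlow hhigh hbig] at he
    have hF0 : F (2*j) = -v ⟨2*j, hc2⟩ := by
      simp only [hF]
      rw [dif_pos hc2, hAe (2*j) (2*j+1) hc2 hr1,
        tA_sv n m ι α1 α2 α3 _ _ (i0+j) _ _ (by ring) (by ring)]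
      simp only [Complex.ofRealHom_eq_coe]
      push_cast
      ring
    have hF1 : F (2*j+1) = (if cav j then 0 else -(α2:ℂ)) * v ⟨2*j+1, hr1⟩ := by
      simp only [hF]
      rw [dif_pos hr1, hAe (2*j+1) (2*j+1) hr1 hr1,
        tA_vv n m ι α1 α2 α3 _ _ (i0+j) _ _ (by ring) (by ring)]
      by_cases hcv : cav j
      · rw [if_pos ((cav_iff j).mp hcv), if_pos hcv]
        simp
      · rw [if_neg (fun h => hcv ((cav_iff j).mpr h)), if_neg hcv]
        simp only [Complex.ofRealHom_eq_coe]
        push_cast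
        ring
    have haj : a j = v ⟨2*j, hc2⟩ := by simp only [ha]; rw [dif_pos hc2]
    have hbj : b j = v ⟨2*j+1, hr1⟩ := by simp only [hb]; rw [dif_pos hr1]
    by_cases hnext : j+1 < q
    · have hn2 : 2*j+2 < 2*q := by omega
      have hn3 : 2*j+3 < 2*q := by omega
      have hF2 : F (2*j+2) = v ⟨2*j+2, hn2⟩ := by
        simp only [hF]
        rw [dif_pos hn2, hAe (2*j+2) (2*j+1) hn2 hr1,
          tA_s'v n m ι α1 α2 α3 _ _ (i0+j) _ _ (by ring) (by ring)]
        simp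
      have hF3 : F (2*j+3) = (if cav (j+1) then 0 else (α3:ℂ)) * v ⟨2*j+3, hn3⟩ := by
        simp only [hF]
        rw [dif_pos hn3, hAe (2*j+3) (2*j+1) hn3 hr1,
          tA_v'v n m ι α1 α2 α3 _ _ (i0+j) _ _ (by ring) (by ring)]
        have hiff : (∃ k, (ι k : ℕ) = i0 + j + 1) ↔ cav (j+1) := by
          rw [cav_iff (j+1)]
          constructor <;> (rintro ⟨k, hk⟩; exact ⟨k, by omega⟩)
        by_cases hcv : cav (j+1)
        · rw [if_pos (hiff.mpr hcv), if_pos hcv]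
          simp
        · rw [if_neg (fun h => hcv (hiff.mp h)), if_neg hcv]
          simp only [Complex.ofRealHom_eq_coe]
          ring
      have han : a (j+1) = v ⟨2*j+2, hn2⟩ := by
        simp only [ha]
        rw [dif_pos (show 2*(j+1) < 2*q by omega)]
        congr 1
      have hbn : b (j+1) = v ⟨2*j+3, hn3⟩ := by
        simp only [hb]
        rw [dif_pos (show 2*(j+1)+1 < 2*q by omega)]
        congr 1
      rw [hF0, hF1, hF2, hF3] at he
      rw [if_pos hnext, haj, hbj, han, hbn]
      by_cases hcv : cav j <;> by_cases hcv' : cav (j+1)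
      · rw [if_pos hcv, if_pos hcv'] at he ⊢; linear_combination he
      · rw [if_pos hcv, if_neg hcv'] at he ⊢; linear_combination he
      · rw [if_neg hcv, if_pos hcv'] at he ⊢; linear_combination he
      · rw [if_neg hcv, if_neg hcv'] at he ⊢; linear_combination he
    · have hF2 : F (2*j+2) = 0 := by
        simp only [hF]; rw [dif_neg (by omega)]
      have hF3 : F (2*j+3) = 0 := by
        simp only [hF]; rw [dif_neg (by omega)]
      rw [hF0, hF1, hF2, hF3] at he
      rw [if_neg hnext, haj, hbj]
      by_cases hcv : cav j
      · rw [if_pos hcv] at he ⊢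
        linear_combination he
      · rw [if_neg hcv] at he ⊢
        linear_combination he
  have hα1c : (α1:ℂ) ≠ 0 := by
    simpa using ne_of_gt hα1
  have hα3c : (α3:ℂ) ≠ 0 := by
    simpa using ne_of_gt hα3
  have hcondc : (α1:ℂ) - (α2:ℂ) * (α3:ℂ) + (α3:ℂ) ^ 2 ≠ 0 := by
    intro h
    apply hcond
    exact_mod_cast h
  have hz := aux_chain_elim q cav hcav0 (α1:ℂ) (α2:ℂ) (α3:ℂ) μ hα1c hα3c hcondc a b HS HV HB
  apply hv0
  funext r
  have hr2 : (r : ℕ)/2 < q := by have := r.isLt; omega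
  obtain ⟨haz, hbz⟩ := hz ((r : ℕ)/2) hr2
  by_cases hpar : (r : ℕ) % 2 = 0
  · have hv : a ((r : ℕ)/2) = v r := by
      simp only [ha]
      rw [dif_pos (show 2*((r:ℕ)/2) < 2*q by omega)]
      congr 1
      exact Fin.ext (show 2*((r:ℕ)/2) = (r:ℕ) by omega)
    rw [← hv]
    exact haz
  · have hv : b ((r : ℕ)/2) = v r := by
      simp only [hb]
      rw [dif_pos (show 2*((r:ℕ)/2)+1 < 2*q by omega)]
      congr 1
      exact Fin.ext (show 2*((r:ℕ)/2)+1 = (r:ℕ) by omega)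
    rw [← hv]
    exact hbz

/-- **Theorem 1(2), controllability of the remaining subsystem.** Suppose the first
CAV is not the first vehicle (`i₁ ≥ 2`, i.e. `1 ≤ ι 0` in 0-indexed notation) and
`α₁ − α₂α₃ + α₃² ≠ 0`. With `p = n − i₁ + 1`, the pair `(A₂₂, B₂)` formed from the
last `2p` rows/columns of `A` and the last `2p` rows of `B` is controllable: its
controllability matrix has rank `2p`. (Here `(ι ⟨0, hm⟩ : ℕ) = i₁ − 1`, so
`p = n − (ι ⟨0, hm⟩ : ℕ)` and the retained state indices are `2(i₁−1), …, 2n−1`.) -/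
theorem controllable_subsystem_behind_first_CAV
    (n m : ℕ) (hn : 1 ≤ n) (hm : 1 ≤ m) (hmn : m ≤ n)
    (ι : Fin m → Fin n) (hmono : StrictMono ι)
    (α1 α2 α3 : ℝ) (hα1 : 0 < α1) (hα3 : 0 < α3) (hα23 : α3 < α2)
    (hfirst : 1 ≤ (ι ⟨0, hm⟩ : ℕ))
    (hcond : α1 - α2 * α3 + α3 ^ 2 ≠ 0) :
    (ctrbMat
        ((trafficA n m ι α1 α2 α3).submatrix
          (fun r : Fin (2 * (n - (ι ⟨0, hm⟩ : ℕ))) =>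
            (⟨2 * (ι ⟨0, hm⟩ : ℕ) + (r : ℕ),
              by have := r.isLt; have := (ι ⟨0, hm⟩).isLt; omega⟩ : Fin (2 * n)))
          (fun c : Fin (2 * (n - (ι ⟨0, hm⟩ : ℕ))) =>
            (⟨2 * (ι ⟨0, hm⟩ : ℕ) + (c : ℕ),
              by have := c.isLt; have := (ι ⟨0, hm⟩).isLt; omega⟩ : Fin (2 * n))))
        ((trafficB n m ι).submatrix
          (fun r : Fin (2 * (n - (ι ⟨0, hm⟩ : ℕ))) =>
            (⟨2 * (ι ⟨0, hm⟩ : ℕ) + (r : ℕ),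
              by have := r.isLt; have := (ι ⟨0, hm⟩).isLt; omega⟩ : Fin (2 * n)))
          id)).rank = 2 * (n - (ι ⟨0, hm⟩ : ℕ)) := by
  apply aux_rank_eq_of_vecMul_inj
  intro w hw
  have hlt := (ι ⟨0, hm⟩).isLt
  exact aux_key n m (n - (ι ⟨0, hm⟩ : ℕ)) (ι ⟨0, hm⟩ : ℕ) hm ι α1 α2 α3 hα1 hα3 hcond
    rfl (by omega) (by omega) _ (fun r => rfl) w hw
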